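/- If A and B are bounded operators with AB = λBA, AB ≠ 0, and A is unitary, then |λ| = 1. -/

import Mathlib

variable {H : Type*} [NormedAddCommGroup H] [InnerProductSpace ℂ H] [CompleteSpace H]

theorem stmt12 (A B : H →L[ℂ] H) (lam : ℂ)
    (hU : A ∈ unitary (H →L[ℂ] H))
    (h : A * B = lam • (B * A)) (hne : A * B ≠ 0) :
    ‖lam‖ = 1 := by
  have h1 : ‖A * B‖ = ‖B‖ := CStarRing.norm_mem_unitary_mul B hU
  have h2 : ‖B * A‖ = ‖B‖ := CStarRing.norm_mul_mem_unitary B hU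
  have h3 : ‖A * B‖ = ‖lam‖ * ‖B * A‖ := by
    rw [h, norm_smul]
  have hB : ‖B‖ ≠ 0 := by
    intro hB0
    apply hne
    rw [← norm_eq_zero, h1, hB0]
  rw [h1, h2] at h3
  field_simp at h3
  linarith [norm_nonneg lam]
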